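/- Fix θ ∈ (−1,0)∪(0,∞). Suppose v : 𝒳×𝒴 → ℝ satisfies v(x,y) ≥ 1 for all (x,y), min_{x,y} v(x,y) = 1, and Σ_{x,y} v(x,y)·W̃_θ((x,y)|(x',y')) = λ·v(x',y') for all (x',y') and some λ > 0. Let w(x,y) := P_{X₁Y₁}(x,y)^{1+θ} P_{Y₁}(y)^{−θ} (taken to be 0 when P_{X₁Y₁}(x,y)=0), where P_{Y₁}(y) := Σ_x P_{X₁Y₁}(x,y), and let ⟨v,w⟩ := Σ_{x,y} v(x,y)w(x,y). Then for every n ≥ 1: (n−1)·(−log λ) − log⟨v,w⟩ ≤ θ·H↓_{1+θ}(Xⁿ|Yⁿ) ≤ (n−1)·(−log λ) − log⟨v,w⟩ + log max_{x,y} v(x,y). -/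

import Mathlib

open Real Filter

/-- Joint distribution of a Markov chain of length `m+1` with initial distribution `P1`
and transition matrix `W` (where `W p p'` is the probability of moving from `p'` to `p`). -/
noncomputable def chainProb {𝒳 𝒴 : Type*} (W : 𝒳 × 𝒴 → 𝒳 × 𝒴 → ℝ) (P1 : 𝒳 × 𝒴 → ℝ)
    (m : ℕ) (z : Fin (m + 1) → 𝒳 × 𝒴) : ℝ :=
  P1 (z 0) * ∏ i : Fin m, W (z i.succ) (z i.castSucc)

/-- `θ · H↓_{1+θ}(Xⁿ|Yⁿ)` for the length-`(m+1)` Markov chain. -/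
noncomputable def thetaCondRenyiDownChain {𝒳 𝒴 : Type*} [Fintype 𝒳] [Fintype 𝒴]
    [DecidableEq 𝒴] (W : 𝒳 × 𝒴 → 𝒳 × 𝒴 → ℝ) (P1 : 𝒳 × 𝒴 → ℝ) (θ : ℝ) (m : ℕ) : ℝ :=
  -Real.log (∑ z : Fin (m + 1) → 𝒳 × 𝒴,
    if 0 < chainProb W P1 m z then
      chainProb W P1 m z ^ (1 + θ) *
        (∑ xn : Fin (m + 1) → 𝒳, chainProb W P1 m fun i => (xn i, (z i).2)) ^ (-θ)
    else 0)

lemma chain_sum_eigen {α : Type*} [Fintype α] (w v : α → ℝ) (Wt : α → α → ℝ) (lam : ℝ)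
    (heig : ∀ x', ∑ x, v x * Wt x x' = lam * v x') :
    ∀ m : ℕ, (∑ f : Fin (m+1) → α,
      (w (f 0) * ∏ i : Fin m, Wt (f i.succ) (f i.castSucc)) * v (f (Fin.last m)))
      = lam ^ m * ∑ p, v p * w p := by
  intro m
  induction m with
  | zero =>
      rw [Fintype.sum_equiv (Equiv.funUnique (Fin 1) α) _ (fun a => v a * w a)
        (fun f => by simp [Fin.last, mul_comm])]
      simp
  | succ m ih =>
      have hswap := Fintype.sum_equiv (Fin.snocEquiv (fun _ : Fin (m+2) => α))
        (fun q : α × (Fin (m+1) → α) => ((w ((Fin.snoc q.2 q.1 : Fin (m+2) → α) 0) *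
          ∏ i : Fin (m+1), Wt ((Fin.snoc q.2 q.1 : Fin (m+2) → α) i.succ)
            ((Fin.snoc q.2 q.1 : Fin (m+2) → α) i.castSucc)) *
          v ((Fin.snoc q.2 q.1 : Fin (m+2) → α) (Fin.last (m+1)))))
        (fun f : Fin (m+2) → α => ((w (f 0) *
          ∏ i : Fin (m+1), Wt (f i.succ) (f i.castSucc)) * v (f (Fin.last (m+1)))))
        (fun q => rfl)
      rw [← hswap, Fintype.sum_prod_type_right]
      have key : ∀ f : Fin (m+1) → α,
          (∑ x : α, (w ((Fin.snoc f x : Fin (m+2) → α) 0) *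
            ∏ i : Fin (m+1), Wt ((Fin.snoc f x : Fin (m+2) → α) i.succ)
              ((Fin.snoc f x : Fin (m+2) → α) i.castSucc)) *
            v ((Fin.snoc f x : Fin (m+2) → α) (Fin.last (m+1))))
          = lam * ((w (f 0) * ∏ i : Fin m, Wt (f i.succ) (f i.castSucc)) * v (f (Fin.last m))) := by
        intro f
        have h0 : ∀ x : α, (Fin.snoc f x : Fin (m+2) → α) 0 = f 0 := by
          intro x
          have : (0 : Fin (m+2)) = Fin.castSucc 0 := rfl
          rw [this, Fin.snoc_castSucc]
        have hprod : ∀ x : α,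
            (∏ i : Fin (m+1), Wt ((Fin.snoc f x : Fin (m+2) → α) i.succ)
              ((Fin.snoc f x : Fin (m+2) → α) i.castSucc))
            = (∏ i : Fin m, Wt (f i.succ) (f i.castSucc)) * Wt x (f (Fin.last m)) := by
          intro x
          rw [Fin.prod_univ_castSucc]
          congr 1
          · apply Finset.prod_congr rfl
            intro i _
            rw [show i.castSucc.succ = i.succ.castSucc from Fin.ext rfl, Fin.snoc_castSucc, Fin.snoc_castSucc]
          · rw [Fin.succ_last, Fin.snoc_last, Fin.snoc_castSucc]
        calc (∑ x : α, (w ((Fin.snoc f x : Fin (m+2) → α) 0) *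
            ∏ i : Fin (m+1), Wt ((Fin.snoc f x : Fin (m+2) → α) i.succ)
              ((Fin.snoc f x : Fin (m+2) → α) i.castSucc)) *
            v ((Fin.snoc f x : Fin (m+2) → α) (Fin.last (m+1))))
            = ∑ x : α, (w (f 0) * ∏ i : Fin m, Wt (f i.succ) (f i.castSucc)) *
                (v x * Wt x (f (Fin.last m))) := by
              apply Finset.sum_congr rfl
              intro x _
              rw [h0, hprod, Fin.snoc_last]
              ring
          _ = (w (f 0) * ∏ i : Fin m, Wt (f i.succ) (f i.castSucc)) *
              (lam * v (f (Fin.last m))) := by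
              rw [← Finset.mul_sum, heig]
          _ = lam * ((w (f 0) * ∏ i : Fin m, Wt (f i.succ) (f i.castSucc)) * v (f (Fin.last m))) := by
              ring
      rw [Finset.sum_congr rfl (fun f _ => key f), ← Finset.mul_sum, ih]
      ring

lemma chain_sum_marg {α : Type*} [Fintype α] (g : α → ℝ) :
    ∀ (m : ℕ) (Q : Fin m → α → α → ℝ) (c : Fin m → ℝ),
      (∀ i x', ∑ x, Q i x x' = c i) →
      (∑ f : Fin (m+1) → α, g (f 0) * ∏ i : Fin m, Q i (f i.succ) (f i.castSucc))
        = (∑ x, g x) * ∏ i, c i := by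
  intro m
  induction m with
  | zero =>
      intro Q c hQ
      rw [Fintype.sum_equiv (Equiv.funUnique (Fin 1) α) _ (fun a => g a)
        (fun f => by simp)]
      simp
  | succ m ih =>
      intro Q c hQ
      have hswap := Fintype.sum_equiv (Fin.snocEquiv (fun _ : Fin (m+2) => α))
        (fun q : α × (Fin (m+1) → α) => (g ((Fin.snoc q.2 q.1 : Fin (m+2) → α) 0) *
          ∏ i : Fin (m+1), Q i ((Fin.snoc q.2 q.1 : Fin (m+2) → α) i.succ)
            ((Fin.snoc q.2 q.1 : Fin (m+2) → α) i.castSucc)))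
        (fun f : Fin (m+2) → α => (g (f 0) *
          ∏ i : Fin (m+1), Q i (f i.succ) (f i.castSucc)))
        (fun q => rfl)
      rw [← hswap, Fintype.sum_prod_type_right]
      have key : ∀ f : Fin (m+1) → α,
          (∑ x : α, g ((Fin.snoc f x : Fin (m+2) → α) 0) *
            ∏ i : Fin (m+1), Q i ((Fin.snoc f x : Fin (m+2) → α) i.succ)
              ((Fin.snoc f x : Fin (m+2) → α) i.castSucc))
          = (g (f 0) * ∏ i : Fin m, Q i.castSucc (f i.succ) (f i.castSucc)) * c (Fin.last m) := by
        intro f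
        have h0 : ∀ x : α, (Fin.snoc f x : Fin (m+2) → α) 0 = f 0 := by
          intro x
          have : (0 : Fin (m+2)) = Fin.castSucc 0 := rfl
          rw [this, Fin.snoc_castSucc]
        have hprod : ∀ x : α,
            (∏ i : Fin (m+1), Q i ((Fin.snoc f x : Fin (m+2) → α) i.succ)
              ((Fin.snoc f x : Fin (m+2) → α) i.castSucc))
            = (∏ i : Fin m, Q i.castSucc (f i.succ) (f i.castSucc)) *
              Q (Fin.last m) x (f (Fin.last m)) := by
          intro x
          rw [Fin.prod_univ_castSucc]
          congr 1
          · apply Finset.prod_congr rfl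
            intro i _
            rw [show i.castSucc.succ = i.succ.castSucc from Fin.ext rfl, Fin.snoc_castSucc, Fin.snoc_castSucc]
          · rw [Fin.succ_last, Fin.snoc_last, Fin.snoc_castSucc]
        calc (∑ x : α, g ((Fin.snoc f x : Fin (m+2) → α) 0) *
            ∏ i : Fin (m+1), Q i ((Fin.snoc f x : Fin (m+2) → α) i.succ)
              ((Fin.snoc f x : Fin (m+2) → α) i.castSucc))
            = ∑ x : α, (g (f 0) * ∏ i : Fin m, Q i.castSucc (f i.succ) (f i.castSucc)) *
                Q (Fin.last m) x (f (Fin.last m)) := by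
              apply Finset.sum_congr rfl
              intro x _
              rw [h0, hprod]; ring
          _ = (g (f 0) * ∏ i : Fin m, Q i.castSucc (f i.succ) (f i.castSucc)) * c (Fin.last m) := by
              rw [← Finset.mul_sum, hQ]
      rw [Finset.sum_congr rfl (fun f _ => key f), ← Finset.sum_mul,
        ih (fun i => Q i.castSucc) (fun i => c i.castSucc) (fun i x' => hQ i.castSucc x'),
        Fin.prod_univ_castSucc]
      ring

theorem chain_thetaCondRenyiDown_finite_bounds {𝒳 𝒴 : Type*} [Fintype 𝒳] [Fintype 𝒴]
    [DecidableEq 𝒴]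
    (W : 𝒳 × 𝒴 → 𝒳 × 𝒴 → ℝ) (hW0 : ∀ p p', 0 ≤ W p p')
    (hW1 : ∀ p', ∑ p : 𝒳 × 𝒴, W p p' = 1)
    (WY : 𝒴 → 𝒴 → ℝ)
    (hNH : ∀ (x' : 𝒳) (y y' : 𝒴), ∑ x : 𝒳, W (x, y) (x', y') = WY y y')
    (θ : ℝ) (hθ : θ ∈ Set.Ioo (-1 : ℝ) 0 ∪ Set.Ioi 0)
    (P1 : 𝒳 × 𝒴 → ℝ) (hP0 : ∀ p, 0 ≤ P1 p) (hP1 : ∑ p : 𝒳 × 𝒴, P1 p = 1)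
    (v : 𝒳 × 𝒴 → ℝ) (lam : ℝ) (hlam : 0 < lam)
    (hv_ge : ∀ p, 1 ≤ v p) (hv_min : ∃ p, v p = 1)
    (heig : ∀ p' : 𝒳 × 𝒴,
      (∑ p : 𝒳 × 𝒴, v p *
        (if 0 < W p p' then W p p' ^ (1 + θ) * WY p.2 p'.2 ^ (-θ) else 0)) = lam * v p') :
    ∀ m : ℕ,
      (m : ℝ) * (-Real.log lam)
          - Real.log (∑ p : 𝒳 × 𝒴, v p *
              (if 0 < P1 p then P1 p ^ (1 + θ) * (∑ x : 𝒳, P1 (x, p.2)) ^ (-θ) else 0))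
        ≤ thetaCondRenyiDownChain W P1 θ m
      ∧ thetaCondRenyiDownChain W P1 θ m
        ≤ (m : ℝ) * (-Real.log lam)
          - Real.log (∑ p : 𝒳 × 𝒴, v p *
              (if 0 < P1 p then P1 p ^ (1 + θ) * (∑ x : 𝒳, P1 (x, p.2)) ^ (-θ) else 0))
          + Real.log (⨆ p : 𝒳 × 𝒴, v p) := by
  intro m
  obtain ⟨pmin, hpmin⟩ := hv_min
  set Wt : 𝒳 × 𝒴 → 𝒳 × 𝒴 → ℝ :=
    fun p p' => if 0 < W p p' then W p p' ^ (1 + θ) * WY p.2 p'.2 ^ (-θ) else 0 with hWt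
  set w0 : 𝒳 × 𝒴 → ℝ :=
    fun p => if 0 < P1 p then P1 p ^ (1 + θ) * (∑ x : 𝒳, P1 (x, p.2)) ^ (-θ) else 0 with hw0
  have hWY0 : ∀ y y', 0 ≤ WY y y' := by
    intro y y'
    rw [← hNH pmin.1 y y']
    exact Finset.sum_nonneg fun x _ => hW0 _ _
  have hWt0 : ∀ p p', 0 ≤ Wt p p' := by
    intro p p'
    simp only [hWt]
    split
    · exact mul_nonneg (Real.rpow_nonneg (hW0 _ _) _) (Real.rpow_nonneg (hWY0 _ _) _)
    · exact le_refl 0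
  have hw00 : ∀ p, 0 ≤ w0 p := by
    intro p
    simp only [hw0]
    split
    · exact mul_nonneg (Real.rpow_nonneg (hP0 _) _)
        (Real.rpow_nonneg (Finset.sum_nonneg fun x _ => hP0 _) _)
    · exact le_refl 0
  -- marginal formula
  have hM : ∀ z : Fin (m+1) → 𝒳 × 𝒴,
      (∑ xn : Fin (m + 1) → 𝒳, chainProb W P1 m fun i => (xn i, (z i).2))
      = (∑ x : 𝒳, P1 (x, (z 0).2)) * ∏ i : Fin m, WY (z i.succ).2 (z i.castSucc).2 := by
    intro z
    have := chain_sum_marg (fun x : 𝒳 => P1 (x, (z 0).2)) m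
      (fun i x x' => W (x, (z i.succ).2) (x', (z i.castSucc).2))
      (fun i => WY (z i.succ).2 (z i.castSucc).2)
      (fun i x' => hNH x' _ _)
    rw [← this]
    rfl
  -- pointwise tilting identity
  have hpt : ∀ z : Fin (m+1) → 𝒳 × 𝒴,
      (if 0 < chainProb W P1 m z then
        chainProb W P1 m z ^ (1 + θ) *
          (∑ xn : Fin (m + 1) → 𝒳, chainProb W P1 m fun i => (xn i, (z i).2)) ^ (-θ)
      else 0)
      = w0 (z 0) * ∏ i : Fin m, Wt (z i.succ) (z i.castSucc) := by
    intro z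
    by_cases hc : 0 < chainProb W P1 m z
    · have hne : P1 (z 0) ≠ 0 ∧ (∏ i : Fin m, W (z i.succ) (z i.castSucc)) ≠ 0 :=
        mul_ne_zero_iff.mp hc.ne'
      have hP1pos : 0 < P1 (z 0) := (hP0 _).lt_of_ne (Ne.symm hne.1)
      have hWpos : ∀ i : Fin m, 0 < W (z i.succ) (z i.castSucc) := by
        intro i
        exact (hW0 _ _).lt_of_ne
          (Ne.symm (Finset.prod_ne_zero_iff.mp hne.2 i (Finset.mem_univ i)))
      have hWYpos : ∀ i : Fin m, 0 < WY (z i.succ).2 (z i.castSucc).2 := by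
        intro i
        have h1 : W (z i.succ) (z i.castSucc)
            ≤ ∑ x : 𝒳, W (x, (z i.succ).2) ((z i.castSucc).1, (z i.castSucc).2) := by
          have := Finset.single_le_sum
            (f := fun x : 𝒳 => W (x, (z i.succ).2) ((z i.castSucc).1, (z i.castSucc).2))
            (fun x _ => hW0 _ _) (Finset.mem_univ (z i.succ).1)
          simpa using this
        rw [hNH] at h1
        exact lt_of_lt_of_le (hWpos i) h1
      have hPYpos : 0 < ∑ x : 𝒳, P1 (x, (z 0).2) := by
        have h1 : P1 (z 0) ≤ ∑ x : 𝒳, P1 (x, (z 0).2) := by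
          have := Finset.single_le_sum (f := fun x : 𝒳 => P1 (x, (z 0).2))
            (fun x _ => hP0 _) (Finset.mem_univ (z 0).1)
          simpa using this
        exact lt_of_lt_of_le hP1pos h1
      rw [if_pos hc, hM z]
      have e1 : chainProb W P1 m z ^ (1 + θ)
          = P1 (z 0) ^ (1 + θ) * ∏ i : Fin m, W (z i.succ) (z i.castSucc) ^ (1 + θ) := by
        rw [chainProb, Real.mul_rpow (hP0 _) (Finset.prod_nonneg fun i _ => hW0 _ _),
          Real.finset_prod_rpow _ _ (fun i _ => hW0 _ _)]
      have e2 : ((∑ x : 𝒳, P1 (x, (z 0).2)) *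
            ∏ i : Fin m, WY (z i.succ).2 (z i.castSucc).2) ^ (-θ)
          = (∑ x : 𝒳, P1 (x, (z 0).2)) ^ (-θ) *
            ∏ i : Fin m, WY (z i.succ).2 (z i.castSucc).2 ^ (-θ) := by
        rw [Real.mul_rpow (le_of_lt hPYpos) (Finset.prod_nonneg fun i _ => hWY0 _ _),
          Real.finset_prod_rpow _ _ (fun i _ => hWY0 _ _)]
      rw [e1, e2]
      have e3 : w0 (z 0) = P1 (z 0) ^ (1 + θ) * (∑ x : 𝒳, P1 (x, (z 0).2)) ^ (-θ) := by
        simp only [hw0, if_pos hP1pos]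
      have e4 : (∏ i : Fin m, Wt (z i.succ) (z i.castSucc))
          = ∏ i : Fin m, W (z i.succ) (z i.castSucc) ^ (1 + θ) *
              WY (z i.succ).2 (z i.castSucc).2 ^ (-θ) := by
        exact Finset.prod_congr rfl fun i _ => by simp only [hWt, if_pos (hWpos i)]
      rw [e3, e4, Finset.prod_mul_distrib]
      ring
    · rw [if_neg hc]
      have hc0 : chainProb W P1 m z = 0 :=
        le_antisymm (not_lt.mp hc)
          (mul_nonneg (hP0 _) (Finset.prod_nonneg fun i _ => hW0 _ _))
      rcases mul_eq_zero.mp hc0 with h | h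
      · have : w0 (z 0) = 0 := by
          simp only [hw0, h]
          simp
        rw [this, zero_mul]
      · obtain ⟨i, _, hi⟩ := Finset.prod_eq_zero_iff.mp h
        have : Wt (z i.succ) (z i.castSucc) = 0 := by
          simp only [hWt, hi]
          simp
        rw [Finset.prod_eq_zero (Finset.mem_univ i) this, mul_zero]
  -- set up the sums
  set S : ℝ := ∑ z : Fin (m + 1) → 𝒳 × 𝒴,
    if 0 < chainProb W P1 m z then
      chainProb W P1 m z ^ (1 + θ) *
        (∑ xn : Fin (m + 1) → 𝒳, chainProb W P1 m fun i => (xn i, (z i).2)) ^ (-θ)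
    else 0 with hS
  set C : ℝ := ∑ p : 𝒳 × 𝒴, v p * w0 p with hC
  have hSA : S = ∑ z : Fin (m+1) → 𝒳 × 𝒴,
      w0 (z 0) * ∏ i : Fin m, Wt (z i.succ) (z i.castSucc) :=
    Finset.sum_congr rfl fun z _ => hpt z
  have hT : (∑ z : Fin (m+1) → 𝒳 × 𝒴,
      (w0 (z 0) * ∏ i : Fin m, Wt (z i.succ) (z i.castSucc)) * v (z (Fin.last m)))
      = lam ^ m * C := chain_sum_eigen w0 v Wt lam heig m
  have hterm0 : ∀ z : Fin (m+1) → 𝒳 × 𝒴,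
      0 ≤ w0 (z 0) * ∏ i : Fin m, Wt (z i.succ) (z i.castSucc) :=
    fun z => mul_nonneg (hw00 _) (Finset.prod_nonneg fun i _ => hWt0 _ _)
  -- sup of v
  have hbdd : BddAbove (Set.range v) := (Set.finite_range v).bddAbove
  set V : ℝ := ⨆ p : 𝒳 × 𝒴, v p with hV
  have hVge : ∀ p, v p ≤ V := fun p => le_ciSup hbdd p
  have hV1 : (1:ℝ) ≤ V := le_trans (hv_ge pmin) (hVge pmin)
  have hVpos : (0:ℝ) < V := lt_of_lt_of_le one_pos hV1
  -- S ≤ lam^m * C ≤ V * S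
  have hS_le : S ≤ lam ^ m * C := by
    rw [hSA, ← hT]
    apply Finset.sum_le_sum
    intro z _
    nth_rewrite 1 [← mul_one (w0 (z 0) * ∏ i : Fin m, Wt (z i.succ) (z i.castSucc))]
    exact mul_le_mul_of_nonneg_left (hv_ge _) (hterm0 z)
  have hle_VS : lam ^ m * C ≤ V * S := by
    rw [hSA, ← hT, Finset.mul_sum]
    apply Finset.sum_le_sum
    intro z _
    rw [mul_comm V]
    exact mul_le_mul_of_nonneg_left (hVge _) (hterm0 z)
  -- C > 0
  have hCpos : 0 < C := by
    obtain ⟨p0, hp0⟩ : ∃ p, P1 p ≠ 0 := by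
      by_contra h
      push_neg at h
      rw [Finset.sum_congr rfl (fun p _ => h p)] at hP1
      simp at hP1
    have hp0pos : 0 < P1 p0 := (hP0 p0).lt_of_ne (Ne.symm hp0)
    have hPY0 : 0 < ∑ x : 𝒳, P1 (x, p0.2) := by
      have h1 := Finset.single_le_sum (f := fun x : 𝒳 => P1 (x, p0.2))
        (fun x _ => hP0 _) (Finset.mem_univ p0.1)
      calc (0:ℝ) < P1 p0 := hp0pos
        _ = P1 (p0.1, p0.2) := by rw [Prod.mk.eta]
        _ ≤ _ := h1
    have hw0p0 : 0 < w0 p0 := by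
      simp only [hw0, if_pos hp0pos]
      exact mul_pos (Real.rpow_pos_of_pos hp0pos _) (Real.rpow_pos_of_pos hPY0 _)
    have h1 : v p0 * w0 p0 ≤ C := by
      rw [hC]
      exact Finset.single_le_sum
        (f := fun p => v p * w0 p)
        (fun p _ => mul_nonneg (le_trans zero_le_one (hv_ge p)) (hw00 p))
        (Finset.mem_univ p0)
    exact lt_of_lt_of_le (mul_pos (lt_of_lt_of_le one_pos (hv_ge p0)) hw0p0) h1
  have hTpos : 0 < lam ^ m * C := mul_pos (pow_pos hlam m) hCpos
  have hSpos : 0 < S := by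
    by_contra h
    push_neg at h
    have : V * S ≤ 0 := mul_nonpos_of_nonneg_of_nonpos (le_of_lt hVpos) h
    linarith [lt_of_lt_of_le hTpos hle_VS]
  -- log manipulations
  have hlog1 : Real.log S ≤ (m:ℝ) * Real.log lam + Real.log C := by
    have := Real.log_le_log hSpos hS_le
    rwa [Real.log_mul (pow_ne_zero m hlam.ne') hCpos.ne', Real.log_pow] at this
  have hlog2 : (m:ℝ) * Real.log lam + Real.log C ≤ Real.log V + Real.log S := by
    have := Real.log_le_log hTpos hle_VS
    rwa [Real.log_mul (pow_ne_zero m hlam.ne') hCpos.ne', Real.log_pow,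
      Real.log_mul hVpos.ne' hSpos.ne'] at this
  have hunfold : thetaCondRenyiDownChain W P1 θ m = -Real.log S := rfl
  constructor
  · rw [hunfold]
    linarith
  · rw [hunfold]
    linarith
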